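/- Let W★ ∈ ℝ^{p×m} be a matrix of rank r with thin singular value decomposition W★ = U D V⊤, and define the projection operators P_{M⊥}(B) := P_{U⊥} B P_{V⊥}, where P_{U⊥} and P_{V⊥} are the orthogonal projections onto the orthogonal complements of the column space and row space of W★, and P_M(B) := B − P_{M⊥}(B). Then for every B ∈ ℝ^{p×m}, ‖W★ + B‖_* ≥ ‖W★‖_* + ‖P_{M⊥}(B)‖_* − ‖P_M(B)‖_*. -/

import Mathlib

open Matrix

/-- The nuclear norm of a real matrix: the sum of its singular values
(square roots of the eigenvalues of `Aᵀ * A`). -/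
noncomputable def nuclearNorm {p m : Type*} [Fintype p] [Fintype m] [DecidableEq m]
    (A : Matrix p m ℝ) : ℝ :=
  ∑ i, Real.sqrt ((Matrix.isHermitian_conjTranspose_mul_self A).eigenvalues i)

namespace NucAux

/-- Cauchy–Schwarz for the dot product. -/
lemma cs {n : Type*} [Fintype n] (x y : n → ℝ) :
    x ⬝ᵥ y ≤ Real.sqrt (x ⬝ᵥ x) * Real.sqrt (y ⬝ᵥ y) := by
  have h := Real.sum_mul_le_sqrt_mul_sqrt Finset.univ x y
  simpa [dotProduct, pow_two] using h

lemma dot_self_nonneg {n : Type*} [Fintype n] (x : n → ℝ) : 0 ≤ x ⬝ᵥ x :=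
  Finset.sum_nonneg fun _ _ => mul_self_nonneg _

/-- `Z` is a (Euclidean) contraction. -/
def Contr {p m : Type*} [Fintype p] [Fintype m] (Z : Matrix p m ℝ) : Prop :=
  ∀ x : m → ℝ, (Z *ᵥ x) ⬝ᵥ (Z *ᵥ x) ≤ x ⬝ᵥ x

lemma mulVec_dot {p m : Type*} [Fintype p] [Fintype m] (M : Matrix p m ℝ) (x : m → ℝ)
    (y : p → ℝ) : (M *ᵥ x) ⬝ᵥ y = x ⬝ᵥ (Mᵀ *ᵥ y) := by
  rw [mulVec_transpose, dotProduct_comm, dotProduct_mulVec, dotProduct_comm]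

lemma dot_mulVec_self {p m : Type*} [Fintype p] [Fintype m] (M : Matrix p m ℝ) (x : m → ℝ) :
    (M *ᵥ x) ⬝ᵥ (M *ᵥ x) = x ⬝ᵥ ((Mᵀ * M) *ᵥ x) := by
  rw [mulVec_dot, mulVec_mulVec]

/-- Spectral decomposition packaged for real symmetric matrices. -/
lemma spec {m : Type*} [Fintype m] [DecidableEq m] (H : Matrix m m ℝ) (hH : H.IsHermitian) :
    ∃ U : Matrix m m ℝ, Uᵀ * U = 1 ∧ U * Uᵀ = 1 ∧ Uᵀ * H * U = diagonal hH.eigenvalues := by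
  refine ⟨hH.eigenvectorUnitary, ?_, ?_, ?_⟩
  · have := mem_unitaryGroup_iff'.mp (hH.eigenvectorUnitary).2
    rwa [star_eq_conjTranspose, conjTranspose_eq_transpose_of_trivial] at this
  · have := mem_unitaryGroup_iff.mp (hH.eigenvectorUnitary).2
    rwa [star_eq_conjTranspose, conjTranspose_eq_transpose_of_trivial] at this
  · have := hH.conjStarAlgAut_star_eigenvectorUnitary
    rw [Unitary.conjStarAlgAut_star_apply] at this
    rw [star_eq_conjTranspose, conjTranspose_eq_transpose_of_trivial] at this
    simpa [RCLike.ofReal_real_eq_id] using this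

variable {p m : Type*} [Fintype p] [Fintype m] [DecidableEq m]

lemma eig_nonneg (A : Matrix p m ℝ) (i : m) :
    0 ≤ (Matrix.isHermitian_conjTranspose_mul_self A).eigenvalues i := by
  have h : (Aᵀ * A).PosSemidef := by
    have := posSemidef_conjTranspose_mul_self A
    rwa [conjTranspose_eq_transpose_of_trivial] at this
  exact h.eigenvalues_nonneg i

/-- Upper half of the dual characterization of the nuclear norm. -/
lemma dual_le (A Z : Matrix p m ℝ) (hZ : Contr Z) : trace (Zᵀ * A) ≤ nuclearNorm A := by
  classical
  obtain ⟨U, hU1, hU2, hD⟩ := spec (Aᵀ * A) (Matrix.isHermitian_conjTranspose_mul_self A)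
  have key : trace (Zᵀ * A) = ∑ i, (fun j => (Z * U) j i) ⬝ᵥ (fun j => (A * U) j i) := by
    have e1 : (Z * U)ᵀ * (A * U) = Uᵀ * ((Zᵀ * A) * U) := by
      simp [transpose_mul, Matrix.mul_assoc]
    have e2 : trace ((Z * U)ᵀ * (A * U)) = trace (Zᵀ * A) := by
      rw [e1, Matrix.trace_mul_comm, Matrix.mul_assoc, Matrix.mul_assoc, hU2, Matrix.mul_one]
    rw [← e2]
    simp [Matrix.trace, Matrix.mul_apply, Matrix.diag, dotProduct, mul_comm]
  rw [key]
  apply Finset.sum_le_sum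
  intro i _
  set zi : p → ℝ := fun j => (Z * U) j i with hzi
  set ai : p → ℝ := fun j => (A * U) j i with hai
  have hcol : ∀ (M : Matrix p m ℝ), (fun j => (M * U) j i) = M *ᵥ (fun k => U k i) := by
    intro M; funext j; simp [Matrix.mul_apply, Matrix.mulVec, dotProduct]
  have hu : (fun k => U k i) ⬝ᵥ (fun k => U k i) = 1 := by
    have : ((Uᵀ * U) i i : ℝ) = 1 := by rw [hU1]; simp
    simpa [Matrix.mul_apply, dotProduct] using this
  have hz : zi ⬝ᵥ zi ≤ 1 := by
    rw [hzi, hcol Z]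
    calc (Z *ᵥ fun k => U k i) ⬝ᵥ (Z *ᵥ fun k => U k i) ≤ _ := hZ _
    _ = 1 := hu
  have ha : ai ⬝ᵥ ai = (Matrix.isHermitian_conjTranspose_mul_self A).eigenvalues i := by
    have : ai ⬝ᵥ ai = ((A * U)ᵀ * (A * U)) i i := by
      simp [Matrix.mul_apply, dotProduct, hai, mul_comm]
    rw [this]
    have e : (A * U)ᵀ * (A * U)
        = diagonal (Matrix.isHermitian_conjTranspose_mul_self A).eigenvalues := by
      refine Eq.trans ?_ hD; simp [transpose_mul, Matrix.mul_assoc]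
    rw [e]; simp
  calc zi ⬝ᵥ ai ≤ Real.sqrt (zi ⬝ᵥ zi) * Real.sqrt (ai ⬝ᵥ ai) := cs _ _
    _ ≤ 1 * Real.sqrt (ai ⬝ᵥ ai) := by
        apply mul_le_mul_of_nonneg_right _ (Real.sqrt_nonneg _)
        exact Real.sqrt_le_one.mpr hz
    _ = Real.sqrt ((Matrix.isHermitian_conjTranspose_mul_self A).eigenvalues i) := by
        rw [one_mul, ha]

/-- The dual bound for the nuclear norm is attained. -/
lemma dual_attained (A : Matrix p m ℝ) :
    ∃ Z : Matrix p m ℝ, Contr Z ∧ trace (Zᵀ * A) = nuclearNorm A := by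
  classical
  set hH := Matrix.isHermitian_conjTranspose_mul_self A with hhH
  obtain ⟨U, hU1, hU2, hD⟩ := spec (Aᵀ * A) hH
  set lam : m → ℝ := hH.eigenvalues with hlam
  have hnn : ∀ i, 0 ≤ lam i := fun i => eig_nonneg A i
  set c : m → ℝ := fun i => if lam i = 0 then 0 else (Real.sqrt (lam i))⁻¹ with hc
  set e : m → ℝ := fun i => c i * lam i * c i with he
  have he1 : ∀ i, 0 ≤ e i ∧ e i ≤ 1 := by
    intro i
    by_cases h : lam i = 0
    · simp [he, hc, h]
    · have hpos : 0 < lam i := lt_of_le_of_ne (hnn i) (Ne.symm h)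
      have hs : Real.sqrt (lam i) ≠ 0 := by
        rw [Real.sqrt_ne_zero']; exact hpos
      have : e i = 1 := by
        simp only [he, hc, if_neg h]
        rw [show lam i = Real.sqrt (lam i) * Real.sqrt (lam i) from
          (Real.mul_self_sqrt (hnn i)).symm]
        field_simp
        rw [Real.sqrt_sq (Real.sqrt_nonneg _)]
      rw [this]; norm_num
  refine ⟨A * U * diagonal c * Uᵀ, ?_, ?_⟩
  · -- contraction
    intro x
    have hZtZ : (A * U * diagonal c * Uᵀ)ᵀ * (A * U * diagonal c * Uᵀ)
        = U * diagonal e * Uᵀ := by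
      calc (A * U * diagonal c * Uᵀ)ᵀ * (A * U * diagonal c * Uᵀ)
          = U * diagonal c * (Uᵀ * (Aᵀ * A) * U) * diagonal c * Uᵀ := by
            simp [transpose_mul, diagonal_transpose, Matrix.mul_assoc]
        _ = U * (diagonal c * diagonal lam * diagonal c) * Uᵀ := by
            rw [hD]; simp [Matrix.mul_assoc]; rfl
        _ = U * diagonal e * Uᵀ := by
            rw [diagonal_mul_diagonal, diagonal_mul_diagonal]
    rw [dot_mulVec_self, hZtZ]
    have expand : x ⬝ᵥ ((U * diagonal e * Uᵀ) *ᵥ x)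
        = (Uᵀ *ᵥ x) ⬝ᵥ (diagonal e *ᵥ (Uᵀ *ᵥ x)) := by
      rw [← mulVec_mulVec, ← mulVec_mulVec]
      rw [dotProduct_comm, mulVec_dot]
      rw [dotProduct_comm]
    rw [expand]
    set y := Uᵀ *ᵥ x with hy
    have hyx : y ⬝ᵥ y = x ⬝ᵥ x := by
      rw [hy, dot_mulVec_self, transpose_transpose, hU2, one_mulVec]
    have : y ⬝ᵥ (diagonal e *ᵥ y) ≤ y ⬝ᵥ y := by
      have hl : y ⬝ᵥ (diagonal e *ᵥ y) = ∑ i, e i * (y i * y i) := by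
        simp [dotProduct, mulVec_diagonal]; apply Finset.sum_congr rfl; intros; ring
      rw [hl]
      apply Finset.sum_le_sum
      intro i _
      calc e i * (y i * y i) ≤ 1 * (y i * y i) :=
            mul_le_mul_of_nonneg_right (he1 i).2 (mul_self_nonneg _)
        _ = y i * y i := one_mul _
    calc y ⬝ᵥ (diagonal e *ᵥ y) ≤ y ⬝ᵥ y := this
      _ = x ⬝ᵥ x := hyx
  · -- trace value
    have e : (A * U * diagonal c * Uᵀ)ᵀ * A = U * diagonal c * Uᵀ * Aᵀ * A := by
      simp [transpose_mul, diagonal_transpose, Matrix.mul_assoc]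
    rw [e]
    have : trace (U * diagonal c * Uᵀ * Aᵀ * A) = trace (diagonal c * (Uᵀ * (Aᵀ * A) * U)) := by
      have h1 : U * diagonal c * Uᵀ * Aᵀ * A = U * (diagonal c * Uᵀ * Aᵀ * A) := by
        simp [Matrix.mul_assoc]
      rw [h1, Matrix.trace_mul_comm]
      congr 1
      simp [Matrix.mul_assoc]
    rw [this, hD, diagonal_mul_diagonal, trace_diagonal]
    show _ = nuclearNorm A
    unfold nuclearNorm
    apply Finset.sum_congr rfl
    intro i _
    show c i * lam i = Real.sqrt (lam i)
    by_cases h : lam i = 0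
    · simp [hc, h]
    · have hpos : 0 < lam i := lt_of_le_of_ne (hnn i) (Ne.symm h)
      have hs : Real.sqrt (lam i) ≠ 0 := by
        rw [Real.sqrt_ne_zero']; exact hpos
      simp only [hc, if_neg h]
      rw [show lam i = Real.sqrt (lam i) * Real.sqrt (lam i) from
        (Real.mul_self_sqrt (hnn i)).symm]
      field_simp
      rw [Real.sqrt_sq (Real.sqrt_nonneg _)]

/-- Triangle inequality for the nuclear norm. -/
lemma triangle (X Y : Matrix p m ℝ) :
    nuclearNorm (X + Y) ≤ nuclearNorm X + nuclearNorm Y := by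
  obtain ⟨Z, hZ, hEq⟩ := dual_attained (X + Y)
  rw [← hEq, Matrix.mul_add, trace_add]
  exact add_le_add (dual_le X Z hZ) (dual_le Y Z hZ)

lemma contr_neg {Z : Matrix p m ℝ} (hZ : Contr Z) : Contr (-Z) := by
  intro x; rw [neg_mulVec]
  simpa [dotProduct, neg_mul_neg] using hZ x

lemma nuclearNorm_neg (X : Matrix p m ℝ) : nuclearNorm (-X) = nuclearNorm X := by
  apply le_antisymm
  · obtain ⟨Z, hZ, hEq⟩ := dual_attained (-X)
    rw [← hEq]
    have : trace (Zᵀ * -X) = trace ((-Z)ᵀ * X) := by simp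
    rw [this]
    exact dual_le X (-Z) (contr_neg hZ)
  · obtain ⟨Z, hZ, hEq⟩ := dual_attained X
    rw [← hEq]
    have : trace (Zᵀ * X) = trace ((-Z)ᵀ * -X) := by simp
    rw [this]
    exact dual_le (-X) (-Z) (contr_neg hZ)

/-- For a symmetric idempotent `P`, `0 ≤ a ⬝ᵥ (P *ᵥ a)`. -/
lemma proj_nonneg {n : Type*} [Fintype n] {P : Matrix n n ℝ} (hs : Pᵀ = P) (hi : P * P = P)
    (a : n → ℝ) : 0 ≤ a ⬝ᵥ (P *ᵥ a) := by
  have : a ⬝ᵥ (P *ᵥ a) = (P *ᵥ a) ⬝ᵥ (P *ᵥ a) := by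
    rw [dot_mulVec_self, hs, hi]
  rw [this]; exact dot_self_nonneg _

lemma one_sub_symm {n : Type*} [Fintype n] [DecidableEq n] {P : Matrix n n ℝ} (hs : Pᵀ = P) :
    (1 - P)ᵀ = 1 - P := by rw [transpose_sub, transpose_one, hs]

lemma one_sub_idem {n : Type*} [Fintype n] [DecidableEq n] {P : Matrix n n ℝ} (hi : P * P = P) :
    (1 - P) * (1 - P) = 1 - P := by
  simp [Matrix.sub_mul, Matrix.mul_sub, hi]

lemma proj_le {n : Type*} [Fintype n] [DecidableEq n] {P : Matrix n n ℝ} (hs : Pᵀ = P)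
    (hi : P * P = P) (a : n → ℝ) : a ⬝ᵥ (P *ᵥ a) ≤ a ⬝ᵥ a := by
  have h := proj_nonneg (one_sub_symm hs) (one_sub_idem hi) a
  have e : a ⬝ᵥ ((1 - P) *ᵥ a) = a ⬝ᵥ a - a ⬝ᵥ (P *ᵥ a) := by
    rw [sub_mulVec, dotProduct_sub, one_mulVec]
  rw [e] at h; linarith

lemma trace_sandwich (X : Matrix p p ℝ) (Z W : Matrix p m ℝ) (Y : Matrix m m ℝ) :
    trace ((X * Z * Y)ᵀ * W) = trace (Zᵀ * (Xᵀ * (W * Yᵀ))) := by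
  have e : (X * Z * Y)ᵀ * W = Yᵀ * ((Zᵀ * Xᵀ) * W) := by
    simp [transpose_mul, Matrix.mul_assoc]
  rw [e, Matrix.trace_mul_comm]
  congr 1
  simp [Matrix.mul_assoc]

/-- Nuclear norm is superadditive on matrices with orthogonal row and column supports. -/
lemma ortho_ge (W C : Matrix p m ℝ) [DecidableEq p]
    (Pu : Matrix p p ℝ) (Pv : Matrix m m ℝ)
    (hPus : Puᵀ = Pu) (hPui : Pu * Pu = Pu)
    (hPvs : Pvᵀ = Pv) (hPvi : Pv * Pv = Pv)
    (hPuW : Pu * W = 0) (hWPv : W * Pv = 0)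
    (hPuC : Pu * C = C) (hCPv : C * Pv = C) :
    nuclearNorm W + nuclearNorm C ≤ nuclearNorm (W + C) := by
  obtain ⟨Z₁, hZ₁, hE₁⟩ := dual_attained W
  obtain ⟨Z₂, hZ₂, hE₂⟩ := dual_attained C
  set Q : Matrix p p ℝ := 1 - Pu with hQ
  set R : Matrix m m ℝ := 1 - Pv with hR
  set Z : Matrix p m ℝ := Q * Z₁ * R + Pu * Z₂ * Pv with hZdef
  have hQs : Qᵀ = Q := one_sub_symm hPus
  have hQi : Q * Q = Q := one_sub_idem hPui
  have hRs : Rᵀ = R := one_sub_symm hPvs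
  have hRi : R * R = R := one_sub_idem hPvi
  have hContr : Contr Z := by
    intro x
    have hsplit : Z *ᵥ x = Q *ᵥ (Z₁ *ᵥ (R *ᵥ x)) + Pu *ᵥ (Z₂ *ᵥ (Pv *ᵥ x)) := by
      rw [hZdef, add_mulVec]
      simp [← mulVec_mulVec, Matrix.mul_assoc]
    set a := Z₁ *ᵥ (R *ᵥ x) with ha
    set b := Z₂ *ᵥ (Pv *ᵥ x) with hb
    set u := Q *ᵥ a with hu
    set v := Pu *ᵥ b with hv
    have horth : u ⬝ᵥ v = 0 := by
      rw [hu, hv, mulVec_dot, hQs, mulVec_mulVec]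
      have : Q * Pu = 0 := by
        rw [hQ, Matrix.sub_mul, Matrix.one_mul, hPui, sub_self]
      rw [this]; simp
    have huu : u ⬝ᵥ u ≤ (R *ᵥ x) ⬝ᵥ (R *ᵥ x) := by
      have e1 : u ⬝ᵥ u = a ⬝ᵥ (Q *ᵥ a) := by
        rw [hu, dot_mulVec_self, hQs, hQi]
      rw [e1]
      exact le_trans (proj_le hQs hQi a) (hZ₁ _)
    have hvv : v ⬝ᵥ v ≤ (Pv *ᵥ x) ⬝ᵥ (Pv *ᵥ x) := by
      have e1 : v ⬝ᵥ v = b ⬝ᵥ (Pu *ᵥ b) := by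
        rw [hv, dot_mulVec_self, hPus, hPui]
      rw [e1]
      exact le_trans (proj_le hPus hPui b) (hZ₂ _)
    have hRx : (R *ᵥ x) ⬝ᵥ (R *ᵥ x) = x ⬝ᵥ (R *ᵥ x) := by
      rw [dot_mulVec_self, hRs, hRi]
    have hPx : (Pv *ᵥ x) ⬝ᵥ (Pv *ᵥ x) = x ⬝ᵥ (Pv *ᵥ x) := by
      rw [dot_mulVec_self, hPvs, hPvi]
    have hsum : x ⬝ᵥ (R *ᵥ x) + x ⬝ᵥ (Pv *ᵥ x) = x ⬝ᵥ x := by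
      rw [← dotProduct_add, ← add_mulVec]
      have : R + Pv = 1 := by rw [hR, sub_add_cancel]
      rw [this, one_mulVec]
    have expand : (Z *ᵥ x) ⬝ᵥ (Z *ᵥ x) = u ⬝ᵥ u + 2 * (u ⬝ᵥ v) + v ⬝ᵥ v := by
      rw [hsplit, add_dotProduct, dotProduct_add, dotProduct_add, dotProduct_comm v u]
      ring
    rw [expand, horth]
    rw [hRx] at huu; rw [hPx] at hvv
    linarith
  have hTrace : trace (Zᵀ * (W + C)) = nuclearNorm W + nuclearNorm C := by
    have hsR : W * Rᵀ = W := by rw [hRs, hR, Matrix.mul_sub, Matrix.mul_one, hWPv, sub_zero]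
    have h1 : trace ((Q * Z₁ * R)ᵀ * W) = nuclearNorm W := by
      rw [trace_sandwich, hQs, hsR]
      rw [hQ, Matrix.sub_mul, Matrix.one_mul, hPuW, sub_zero, hE₁]
    have h2 : trace ((Q * Z₁ * R)ᵀ * C) = 0 := by
      rw [trace_sandwich, hRs]
      have hCR : C * R = 0 := by rw [hR, Matrix.mul_sub, Matrix.mul_one, hCPv, sub_self]
      rw [hCR, Matrix.mul_zero, Matrix.mul_zero, trace_zero]
    have h3 : trace ((Pu * Z₂ * Pv)ᵀ * W) = 0 := by
      rw [trace_sandwich, hPvs, hWPv, Matrix.mul_zero, Matrix.mul_zero, trace_zero]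
    have h4 : trace ((Pu * Z₂ * Pv)ᵀ * C) = nuclearNorm C := by
      rw [trace_sandwich, hPvs, hCPv, hPus, hPuC, hE₂]
    have hexp : Zᵀ * (W + C) = (Q * Z₁ * R)ᵀ * W + (Q * Z₁ * R)ᵀ * C
        + ((Pu * Z₂ * Pv)ᵀ * W + (Pu * Z₂ * Pv)ᵀ * C) := by
      rw [hZdef, transpose_add]
      rw [Matrix.add_mul, Matrix.mul_add, Matrix.mul_add]
    rw [hexp, trace_add, trace_add, trace_add, h1, h2, h3, h4]
    ring
  calc nuclearNorm W + nuclearNorm C = trace (Zᵀ * (W + C)) := hTrace.symm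
    _ ≤ nuclearNorm (W + C) := dual_le _ _ hContr

end NucAux

/-- **Per-group decomposability of the nuclear norm.**
Let `W★ ∈ ℝ^{p×m}` have rank `r`, let `Pu` be the orthogonal projection onto the
orthogonal complement of the column space of `W★` (characterized by being symmetric,
idempotent, and having kernel exactly the column space of `W★`), and let `Pv` be the
orthogonal projection onto the orthogonal complement of the row space of `W★`
(symmetric, idempotent, kernel = row space of `W★` = column space of `W★ᵀ`).
With `P_{M⊥}(B) = Pu * B * Pv` and `P_M(B) = B - Pu * B * Pv`, for every `B`:
`‖W★ + B‖_* ≥ ‖W★‖_* + ‖P_{M⊥}(B)‖_* − ‖P_M(B)‖_*`. -/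
theorem nuclearNorm_decomposability
    {p m : ℕ} (Wstar B : Matrix (Fin p) (Fin m) ℝ) (r : ℕ)
    (hrank : Wstar.rank = r)
    (Pu : Matrix (Fin p) (Fin p) ℝ) (Pv : Matrix (Fin m) (Fin m) ℝ)
    (hPu_symm : Puᵀ = Pu) (hPu_idem : Pu * Pu = Pu)
    (hPu_ker : ∀ x : Fin p → ℝ, Pu *ᵥ x = 0 ↔ ∃ y : Fin m → ℝ, Wstar *ᵥ y = x)
    (hPv_symm : Pvᵀ = Pv) (hPv_idem : Pv * Pv = Pv)
    (hPv_ker : ∀ x : Fin m → ℝ, Pv *ᵥ x = 0 ↔ ∃ y : Fin p → ℝ, Wstarᵀ *ᵥ y = x) :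
    nuclearNorm (Wstar + B) ≥
      nuclearNorm Wstar + nuclearNorm (Pu * B * Pv) - nuclearNorm (B - Pu * B * Pv) := by
  classical
  have hPuW : Pu * Wstar = 0 := by
    ext i j
    have hcol : Pu *ᵥ (fun k => Wstar k j) = 0 := by
      apply (hPu_ker _).mpr
      exact ⟨Pi.single j 1, by funext k; simp [mulVec_single]⟩
    have := congrFun hcol i
    simpa [Matrix.mul_apply, Matrix.mulVec, dotProduct] using this
  have hPvWt : Pv * Wstarᵀ = 0 := by
    ext i j
    have hcol : Pv *ᵥ (fun k => Wstarᵀ k j) = 0 := by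
      apply (hPv_ker _).mpr
      exact ⟨Pi.single j 1, by funext k; simp [mulVec_single]⟩
    have := congrFun hcol i
    simpa [Matrix.mul_apply, Matrix.mulVec, dotProduct] using this
  have hWPv : Wstar * Pv = 0 := by
    have h := congrArg Matrix.transpose hPvWt
    simpa [transpose_mul, hPv_symm] using h
  set C := Pu * B * Pv with hC
  have hPuC : Pu * C = C := by
    rw [hC, ← Matrix.mul_assoc, ← Matrix.mul_assoc, hPu_idem]
  have hCPv : C * Pv = C := by
    rw [hC, Matrix.mul_assoc, hPv_idem]
  have h1 := NucAux.ortho_ge Wstar C Pu Pv hPu_symm hPu_idem hPv_symm hPv_idem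
    hPuW hWPv hPuC hCPv
  have h2 : nuclearNorm (Wstar + C) ≤ nuclearNorm (Wstar + B) + nuclearNorm (B - C) := by
    have e : Wstar + C = (Wstar + B) + (-(B - C)) := by abel
    rw [e]
    calc nuclearNorm ((Wstar + B) + (-(B - C)))
        ≤ nuclearNorm (Wstar + B) + nuclearNorm (-(B - C)) := NucAux.triangle _ _
      _ = nuclearNorm (Wstar + B) + nuclearNorm (B - C) := by rw [NucAux.nuclearNorm_neg]
  rw [ge_iff_le]
  linarith
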